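/- arXiv:2002.03878 — 6 statements merged into one kernel-verified Lean document; each statement's English description precedes it below -/
import Mathlib

section
/- Let V be a real vector space and let (x,t) ∈ V^(I∪_i J) × (0,∞)^(I∪_i J) with ∑ t = 1, ∑ t_k x_k = 0. Define the composition ((x/J,t/J), (x|J,t|J)) ↦ (x/J +_i (t/J)·(x|J), (t/J)·_i(t|J)) where (t·_i u)_j = t_j if j ∉ J and t_i u_j if j ∈ J, and (x +_i t y)_j = x_j if j ∉ J and x_i + t_i y_j if j ∈ J. Then composing the decomposition (x,t) ↦ ((x/J,t/J),(x|J,t|J)) with this composition map recovers (x,t). Conversely, decomposing a composition recovers the original pair of points. Hence the composition map R_V(I) × R_V(J) → R_V(I∪_i J) is a bijection. -/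
/-- The space `R_V(K)` of configurations: points `x : K → V`, weights `t : K → ℝ`,
with `t` positive, weights summing to `1`, and weighted barycentre `0`. -/
def RVset (V : Type*) [AddCommGroup V] [Module ℝ V] (K : Type*) [Fintype K] :
    Set ((K → V) × (K → ℝ)) :=
  {p | (∀ k, 0 < p.2 k) ∧ (∑ k, p.2 k = 1) ∧ (∑ k, p.2 k • p.1 k = 0)}

/-- The operadic composition map `((x,t),(y,u)) ↦ (x +_i t y, t ·_i u)`, defined on raw
data, landing in data indexed by `I ∪_i J = (I ∖ {i}) ⊕ J`. -/
def compFn {V : Type*} [AddCommGroup V] [Module ℝ V]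
    {I J : Type*} [DecidableEq I] (i : I)
    (p : ((I → V) × (I → ℝ)) × ((J → V) × (J → ℝ))) :
    (({i' : I // i' ≠ i} ⊕ J) → V) × (({i' : I // i' ≠ i} ⊕ J) → ℝ) :=
  (Sum.elim (fun i' => p.1.1 i'.1) (fun j => p.1.1 i + p.1.2 i • p.2.1 j),
   Sum.elim (fun i' => p.1.2 i'.1) (fun j => p.1.2 i * p.2.2 j))

/-- The decomposition map `(x,t) ↦ ((x/J, t/J), (x|J, t|J))` of the barycentre
(co)operad, defined on raw data. -/
noncomputable def decompFn {V : Type*} [AddCommGroup V] [Module ℝ V]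
    {I J : Type*} [DecidableEq I] [Fintype J] (i : I)
    (q : (({i' : I // i' ≠ i} ⊕ J) → V) × (({i' : I // i' ≠ i} ⊕ J) → ℝ)) :
    ((I → V) × (I → ℝ)) × ((J → V) × (J → ℝ)) :=
  ((fun i' => if h : i' = i then
        (∑ j, q.2 (Sum.inr j))⁻¹ • ∑ j, q.2 (Sum.inr j) • q.1 (Sum.inr j)
      else q.1 (Sum.inl ⟨i', h⟩),
    fun i' => if h : i' = i then ∑ j, q.2 (Sum.inr j) else q.2 (Sum.inl ⟨i', h⟩)),
   (fun j => (∑ j', q.2 (Sum.inr j'))⁻¹ •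
      (q.1 (Sum.inr j) -
        (∑ j', q.2 (Sum.inr j'))⁻¹ • ∑ j', q.2 (Sum.inr j') • q.1 (Sum.inr j')),
    fun j => q.2 (Sum.inr j) / ∑ j', q.2 (Sum.inr j')))


lemma sum_split {M : Type*} [AddCommMonoid M] {I : Type*} [Fintype I] [DecidableEq I]
    (i : I) (f : I → M) :
    ∑ i', f i' = f i + ∑ i' : {i' : I // i' ≠ i}, f i'.1 := by
  rw [← Finset.add_sum_erase Finset.univ f (Finset.mem_univ i)]
  congr 1
  exact Finset.sum_subtype (Finset.univ.erase i) (p := fun x => x ≠ i) (by simp) f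

/-- Composing the decomposition recovers the original point of `R_V(I ∪_i J)`;
decomposing a composition recovers the original pair; hence the composition map
`R_V(I) × R_V(J) → R_V(I ∪_i J)` is a bijection. -/
theorem stmt_2 {V : Type*} [AddCommGroup V] [Module ℝ V]
    {I J : Type*} [Fintype I] [Fintype J] [DecidableEq I] [Nonempty I] [Nonempty J]
    (i : I) :
    (∀ q ∈ RVset V ({i' : I // i' ≠ i} ⊕ J), compFn i (decompFn i q) = q) ∧
    (∀ p ∈ (RVset V I) ×ˢ (RVset V J), decompFn i (compFn i p) = p) ∧
    Set.BijOn (compFn i) ((RVset V I) ×ˢ (RVset V J))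
      (RVset V ({i' : I // i' ≠ i} ⊕ J)) := by
  classical
  have key1 : ∀ q ∈ RVset V ({i' : I // i' ≠ i} ⊕ J), compFn i (decompFn i q) = q := by
    rintro q ⟨hpos, hsum, hbar⟩
    have hTpos : 0 < ∑ j, q.2 (Sum.inr j) :=
      Finset.sum_pos (fun j _ => hpos _) Finset.univ_nonempty
    have hTne : (∑ j, q.2 (Sum.inr j)) ≠ 0 := hTpos.ne'
    refine Prod.ext (funext fun k => ?_) (funext fun k => ?_)
    · cases k with
      | inl i' => simp [compFn, decompFn, i'.2]
      | inr j =>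
        simp only [compFn, decompFn, Sum.elim_inr, dif_pos rfl, eq_self_iff_true, dite_true]
        rw [smul_inv_smul₀ hTne, add_sub_cancel]
    · cases k with
      | inl i' => simp [compFn, decompFn, i'.2]
      | inr j =>
        simp only [compFn, decompFn, Sum.elim_inr, dif_pos rfl, eq_self_iff_true, dite_true]
        field_simp
  have key2 : ∀ p ∈ (RVset V I) ×ˢ (RVset V J), decompFn i (compFn i p) = p := by
    rintro ⟨⟨x, t⟩, ⟨y, u⟩⟩ ⟨⟨hpos, hsum, hbar⟩, ⟨hpos', hsum', hbar'⟩⟩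
    simp only at hpos hsum hbar hpos' hsum' hbar'
    have htine : t i ≠ 0 := (hpos i).ne'
    have hT : (∑ j, (compFn i ((x, t), (y, u))).2 (Sum.inr j)) = t i := by
      simp only [compFn, Sum.elim_inr, ← Finset.mul_sum, hsum', mul_one]
    have hS : (∑ j, (compFn i ((x, t), (y, u))).2 (Sum.inr j) •
        (compFn i ((x, t), (y, u))).1 (Sum.inr j)) = t i • x i := by
      simp only [compFn, Sum.elim_inr, smul_add, Finset.sum_add_distrib, ← Finset.sum_smul,
        ← Finset.mul_sum, hsum', mul_one, smul_smul]
      have h2 : ∑ j, (t i * u j * t i) • y j = (t i * t i) • ∑ j, u j • y j := by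
        rw [Finset.smul_sum]
        exact Finset.sum_congr rfl fun j _ => by rw [smul_smul]; ring_nf
      rw [h2, hbar', smul_zero, add_zero]
    refine Prod.ext (Prod.ext (funext fun i' => ?_) (funext fun i' => ?_))
      (Prod.ext (funext fun j => ?_) (funext fun j => ?_))
    · by_cases h : i' = i
      · simp only [decompFn]
        rw [dif_pos h, hT, hS, inv_smul_smul₀ htine, h]
      · simp [decompFn, h, compFn]
    · by_cases h : i' = i
      · simp only [decompFn]
        rw [dif_pos h, hT, h]
      · simp [decompFn, h, compFn]
    · simp only [decompFn]
      rw [hT, hS, inv_smul_smul₀ htine]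
      simp only [compFn, Sum.elim_inr]
      rw [add_sub_cancel_left, inv_smul_smul₀ htine]
    · simp only [decompFn]
      rw [hT]
      simp only [compFn, Sum.elim_inr]
      rw [mul_comm, mul_div_assoc, div_self htine, mul_one]
  have hmaps : Set.MapsTo (compFn i) ((RVset V I) ×ˢ (RVset V J))
      (RVset V ({i' : I // i' ≠ i} ⊕ J)) := by
    rintro ⟨⟨x, t⟩, ⟨y, u⟩⟩ ⟨⟨hpos, hsum, hbar⟩, ⟨hpos', hsum', hbar'⟩⟩
    simp only at hpos hsum hbar hpos' hsum' hbar'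
    refine ⟨?_, ?_, ?_⟩
    · rintro (i' | j)
      · exact hpos _
      · exact mul_pos (hpos i) (hpos' j)
    · rw [Fintype.sum_sum_type]
      simp only [compFn, Sum.elim_inl, Sum.elim_inr, ← Finset.mul_sum, hsum', mul_one]
      rw [← hsum, sum_split i t, add_comm]
    · rw [Fintype.sum_sum_type]
      simp only [compFn, Sum.elim_inl, Sum.elim_inr, smul_add, Finset.sum_add_distrib,
        ← Finset.sum_smul, ← Finset.mul_sum, hsum', mul_one]
      have h2 : ∑ j, (t i * u j) • (t i • y j) = (t i * t i) • ∑ j, u j • y j := by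
        rw [Finset.smul_sum]
        exact Finset.sum_congr rfl fun j _ => by rw [smul_smul, smul_smul]; ring_nf
      rw [h2, hbar', smul_zero, add_zero, ← hbar, sum_split i (fun k => t k • x k)]
      exact add_comm _ _
  have hmaps' : ∀ q ∈ RVset V ({i' : I // i' ≠ i} ⊕ J),
      decompFn i q ∈ (RVset V I) ×ˢ (RVset V J) := by
    rintro q ⟨hpos, hsum, hbar⟩
    have hTpos : 0 < ∑ j, q.2 (Sum.inr j) :=
      Finset.sum_pos (fun j _ => hpos _) Finset.univ_nonempty
    have hTne : (∑ j, q.2 (Sum.inr j)) ≠ 0 := hTpos.ne'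
    have hsum2 : (∑ j, q.2 (Sum.inr j)) + ∑ i' : {i' : I // i' ≠ i}, q.2 (Sum.inl i') = 1 := by
      rw [← hsum, Fintype.sum_sum_type, add_comm]
    have hbar2 : (∑ j, q.2 (Sum.inr j) • q.1 (Sum.inr j))
        + ∑ i' : {i' : I // i' ≠ i}, q.2 (Sum.inl i') • q.1 (Sum.inl i') = 0 := by
      rw [← hbar, Fintype.sum_sum_type, add_comm]
    constructor
    · refine ⟨fun i' => ?_, ?_, ?_⟩
      · by_cases h : i' = i
        · simp only [decompFn]; rw [dif_pos h]; exact hTpos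
        · simpa [decompFn, h] using hpos (Sum.inl ⟨i', h⟩)
      · rw [sum_split i (decompFn i q).1.2]
        have h0 : (decompFn i q).1.2 i = ∑ j, q.2 (Sum.inr j) := by
          simp [decompFn]
        have h1 : ∀ i' : {i' : I // i' ≠ i},
            (decompFn i q).1.2 i'.1 = q.2 (Sum.inl i') := by
          intro i'; simp [decompFn, i'.2]
        rw [h0, Finset.sum_congr rfl fun i' _ => h1 i']
        exact hsum2
      · rw [sum_split i (fun k => (decompFn i q).1.2 k • (decompFn i q).1.1 k)]
        have h0 : (decompFn i q).1.2 i • (decompFn i q).1.1 i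
            = ∑ j, q.2 (Sum.inr j) • q.1 (Sum.inr j) := by
          simp only [decompFn, dif_pos rfl, eq_self_iff_true, dite_true]
          rw [smul_inv_smul₀ hTne]
        have h1 : ∀ i' : {i' : I // i' ≠ i},
            (decompFn i q).1.2 i'.1 • (decompFn i q).1.1 i'.1
              = q.2 (Sum.inl i') • q.1 (Sum.inl i') := by
          intro i'; simp [decompFn, i'.2]
        rw [h0, Finset.sum_congr rfl fun i' _ => h1 i']
        exact hbar2
    · refine ⟨fun j => ?_, ?_, ?_⟩
      · exact div_pos (hpos _) hTpos
      · simp only [decompFn, div_eq_mul_inv, ← Finset.sum_mul]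
        exact mul_inv_cancel₀ hTne
      · simp only [decompFn]
        have step : ∀ j : J, (q.2 (Sum.inr j) / ∑ j', q.2 (Sum.inr j')) •
            ((∑ j', q.2 (Sum.inr j'))⁻¹ • (q.1 (Sum.inr j) -
              (∑ j', q.2 (Sum.inr j'))⁻¹ • ∑ j', q.2 (Sum.inr j') • q.1 (Sum.inr j')))
            = ((∑ j', q.2 (Sum.inr j'))⁻¹ * (∑ j', q.2 (Sum.inr j'))⁻¹) •
              (q.2 (Sum.inr j) • q.1 (Sum.inr j) -
                (q.2 (Sum.inr j) * (∑ j', q.2 (Sum.inr j'))⁻¹) •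
                  ∑ j', q.2 (Sum.inr j') • q.1 (Sum.inr j')) := by
          intro j
          match_scalars <;> ring
        rw [Finset.sum_congr rfl fun j _ => step j, ← Finset.smul_sum,
          Finset.sum_sub_distrib, ← Finset.sum_smul, ← Finset.sum_mul,
          mul_inv_cancel₀ hTne, one_smul, sub_self, smul_zero]
  refine ⟨key1, key2, hmaps, fun p hp p' hp' h => ?_, fun q hq => ⟨decompFn i q, hmaps' q hq, key1 q hq⟩⟩
  rw [← key2 p hp, ← key2 p' hp', h]
end

section
/- Let V be a finite-dimensional real normed vector space, I a finite set, x : I → V, t : I → (0,∞), and let π be the partition of I generated by the relation identifying i and j whenever |x_i − x_j| ≤ t_i + t_j. Then for every i ∈ I, writing [i] for the block of π containing i, t_L = ∑_{l∈L} t_l and x_L = (∑_{l∈L} t_l x_l)/t_L, one has |x_i − x_{[i]}| ≤ t_{[i]} − t_i. -/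
open Finset Relation

section Aux

variable {I : Type*} [DecidableEq I]

/-- Sets grown from `{i}` by repeatedly adding a vertex related to the current set. -/
inductive Grown (r : I → I → Prop) (i : I) : Finset I → Prop
  | single : Grown r i {i}
  | grow {S : Finset I} {j k : I} : Grown r i S → k ∈ S → j ∉ S → r j k →
      Grown r i (insert j S)

variable {V : Type*} [NormedAddCommGroup V] [NormedSpace ℝ V]

lemma grown_bound (x : I → V) (t : I → ℝ) (ht : ∀ k, 0 < t k) (i : I)
    {S : Finset I}
    (hg : Grown (fun a b => ‖x a - x b‖ ≤ t a + t b) i S) :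
    ∀ a ∈ S, ‖x a - (∑ l ∈ S, t l)⁻¹ • ∑ l ∈ S, t l • x l‖ ≤ (∑ l ∈ S, t l) - t a := by
  induction hg with
  | single =>
      intro a ha
      rw [Finset.mem_singleton] at ha
      subst ha
      simp [inv_smul_smul₀ (ht a).ne']
  | @grow S j k hS hk hj hr ih =>
      intro a ha
      set s : ℝ := ∑ l ∈ S, t l with hs
      have hSne : S.Nonempty := ⟨k, hk⟩
      have hspos : 0 < s := Finset.sum_pos (fun l _ => ht l) hSne
      have hTpos : 0 < t j + s := add_pos (ht j) hspos
      set b' : V := s⁻¹ • ∑ l ∈ S, t l • x l with hb'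
      have hsum : ∑ l ∈ insert j S, t l = t j + s := by rw [Finset.sum_insert hj]
      have hsumx : ∑ l ∈ insert j S, t l • x l = t j • x j + s • b' := by
        rw [Finset.sum_insert hj, hb', smul_inv_smul₀ hspos.ne']
      -- bound for k: ‖x k - b'‖ ≤ s - t k
      have hkb : ‖x k - b'‖ ≤ s - t k := ih k hk
      rw [hsum, hsumx]
      have key : ∀ v : V, (t j + s) • (v - (t j + s)⁻¹ • (t j • x j + s • b'))
          = t j • (v - x j) + s • (v - b') := by
        intro v
        rw [smul_sub, smul_inv_smul₀ hTpos.ne']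
        module
      have hnorm : ∀ v : V, ‖v - (t j + s)⁻¹ • (t j • x j + s • b')‖
          = (t j + s)⁻¹ * ‖t j • (v - x j) + s • (v - b')‖ := by
        intro v
        rw [← key v, norm_smul, Real.norm_of_nonneg hTpos.le,
          ← mul_assoc, inv_mul_cancel₀ hTpos.ne', one_mul]
      rcases Finset.mem_insert.mp ha with h | h
      · -- a = j
        subst h
        rw [hnorm]
        have : t a • (x a - x a) + s • (x a - b') = s • (x a - b') := by simp
        rw [this, norm_smul, Real.norm_of_nonneg hspos.le]
        have hab : ‖x a - b'‖ ≤ t a + s := by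
          calc ‖x a - b'‖ ≤ ‖x a - x k‖ + ‖x k - b'‖ := norm_sub_le_norm_sub_add_norm_sub _ _ _
            _ ≤ (t a + t k) + (s - t k) := add_le_add hr hkb
            _ = t a + s := by ring
        calc (t a + s)⁻¹ * (s * ‖x a - b'‖) ≤ (t a + s)⁻¹ * (s * (t a + s)) := by
              apply mul_le_mul_of_nonneg_left _ (inv_nonneg.mpr hTpos.le)
              exact mul_le_mul_of_nonneg_left hab hspos.le
          _ = (t a + s) - t a := by field_simp; ring
      · -- a ∈ S
        have hab' : ‖x a - b'‖ ≤ s - t a := ih a h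
        have haj : ‖x a - x j‖ ≤ 2 * s - t a + t j := by
          calc ‖x a - x j‖ ≤ ‖x a - x k‖ + ‖x k - x j‖ := norm_sub_le_norm_sub_add_norm_sub _ _ _
            _ ≤ (‖x a - b'‖ + ‖b' - x k‖) + ‖x k - x j‖ :=
                add_le_add (norm_sub_le_norm_sub_add_norm_sub _ _ _) le_rfl
            _ ≤ ((s - t a) + (s - t k)) + (t j + t k) := by
                apply add_le_add (add_le_add hab' _) _
                · rw [norm_sub_rev]; exact hkb
                · rw [norm_sub_rev]; exact hr
            _ = 2 * s - t a + t j := by ring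
        rw [hnorm]
        calc (t j + s)⁻¹ * ‖t j • (x a - x j) + s • (x a - b')‖
            ≤ (t j + s)⁻¹ * (t j * ‖x a - x j‖ + s * ‖x a - b'‖) := by
              apply mul_le_mul_of_nonneg_left _ (inv_nonneg.mpr hTpos.le)
              calc ‖t j • (x a - x j) + s • (x a - b')‖
                  ≤ ‖t j • (x a - x j)‖ + ‖s • (x a - b')‖ := norm_add_le _ _
                _ = t j * ‖x a - x j‖ + s * ‖x a - b'‖ := by
                    rw [norm_smul, norm_smul, Real.norm_of_nonneg (ht j).le,
                      Real.norm_of_nonneg hspos.le]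
          _ ≤ (t j + s)⁻¹ * (t j * (2 * s - t a + t j) + s * (s - t a)) := by
              apply mul_le_mul_of_nonneg_left _ (inv_nonneg.mpr hTpos.le)
              exact add_le_add (mul_le_mul_of_nonneg_left haj (ht j).le)
                (mul_le_mul_of_nonneg_left hab' hspos.le)
          _ = (t j + s) - t a := by field_simp; ring
end Aux

section Conn

variable {I : Type*} {r : I → I → Prop}

lemma eqvGen_to_rtg (hsymm : Symmetric r) {a b : I} (h : EqvGen r a b) :
    ReflTransGen r a b := by
  induction h with
  | rel a b h => exact ReflTransGen.single h
  | refl a => exact ReflTransGen.refl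
  | symm a b h ih => exact ReflTransGen.mono (fun _ _ h => hsymm h) _ _ ih.swap
  | trans a b c h1 h2 ih1 ih2 => exact ih1.trans ih2

lemma rtg_to_eqvGen {a b : I} (h : ReflTransGen r a b) : EqvGen r a b := by
  induction h with
  | refl => exact EqvGen.refl a
  | tail h1 h2 ih => exact ih.trans _ _ _ (EqvGen.rel _ _ h2)

/-- If there is a path from inside `T` to outside `T`, there is a boundary edge. -/
lemma exists_boundary [DecidableEq I] (hsymm : Symmetric r) {T : Finset I} {a b : I}
    (h : ReflTransGen r a b) (ha : a ∈ T) (hb : b ∉ T) :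
    ∃ j k, k ∈ T ∧ j ∉ T ∧ r j k ∧ ReflTransGen r a j := by
  induction h with
  | refl => exact absurd ha hb
  | @tail c d h1 h2 ih =>
      by_cases hc : c ∈ T
      · exact ⟨d, c, hc, hb, hsymm h2, h1.tail h2⟩
      · exact ih hc

end Conn

lemma grown_block {I : Type*} [Fintype I] [DecidableEq I] {r : I → I → Prop}
    (hsymm : Symmetric r) (B : I → Finset I)
    (hB : ∀ a b, b ∈ B a ↔ EqvGen r a b) (i : I) :
    Grown r i (B i) := by
  have hi : i ∈ B i := (hB i i).mpr (EqvGen.refl i)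
  suffices h : ∀ n (T : Finset I), (B i \ T).card ≤ n → i ∈ T → T ⊆ B i → Grown r i T →
      Grown r i (B i) by
    refine h (B i \ {i}).card {i} (by simp) (Finset.mem_singleton_self i)
      (Finset.singleton_subset_iff.mpr hi) Grown.single
  intro n
  induction n with
  | zero =>
      intro T hcard hiT hsub hg
      have : B i \ T = ∅ := Finset.card_eq_zero.mp (Nat.le_zero.mp hcard)
      have hBT : B i ⊆ T := by
        intro a haB
        by_contra haT
        exact absurd (Finset.mem_sdiff.mpr ⟨haB, haT⟩) (by simp [this])
      exact (Finset.Subset.antisymm hsub hBT) ▸ hg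
  | succ n ihn =>
      intro T hcard hiT hsub hg
      by_cases hBT : B i ⊆ T
      · exact (Finset.Subset.antisymm hsub hBT) ▸ hg
      · obtain ⟨b, hbB, hbT⟩ := Finset.not_subset.mp hBT
        have hpath : ReflTransGen r i b := eqvGen_to_rtg hsymm ((hB i b).mp hbB)
        obtain ⟨j, k, hkT, hjT, hr, hjpath⟩ := exists_boundary hsymm hpath hiT hbT
        have hjB : j ∈ B i := (hB i j).mpr (rtg_to_eqvGen hjpath)
        refine ihn (insert j T) ?_ (Finset.mem_insert_of_mem hiT)
          (Finset.insert_subset hjB hsub) (hg.grow hkT hjT hr)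
        have : B i \ insert j T = (B i \ T).erase j := by
          ext a; simp [Finset.mem_sdiff, Finset.mem_erase, and_comm, or_comm]
          tauto
        rw [this]
        have hjmem : j ∈ B i \ T := Finset.mem_sdiff.mpr ⟨hjB, hjT⟩
        have := Finset.card_erase_of_mem hjmem
        omega

/-- Lemma (lem:part): if `B i` is the block containing `i` of the partition of `I`
generated by the relation `i ~ j ↔ ‖x i - x j‖ ≤ t i + t j`, then
`‖x i - x_{B i}‖ ≤ t_{B i} - t i`, where `x_L` denotes the weighted barycentre and
`t_L` the combined weight of a block `L`. -/
theorem stmt_6 {V : Type*} [NormedAddCommGroup V] [NormedSpace ℝ V]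
    {I : Type*} [Fintype I]
    (x : I → V) (t : I → ℝ) (ht : ∀ k, 0 < t k)
    (B : I → Finset I)
    (hB : ∀ a b, b ∈ B a ↔ Relation.EqvGen (fun a b => ‖x a - x b‖ ≤ t a + t b) a b)
    (i : I) :
    ‖x i - (∑ l ∈ B i, t l)⁻¹ • ∑ l ∈ B i, t l • x l‖ ≤ (∑ l ∈ B i, t l) - t i := by
  classical
  have hsymm : Symmetric (fun a b => ‖x a - x b‖ ≤ t a + t b) := by
    intro a b h
    rw [norm_sub_rev]
    linarith [h]
  have hg := grown_block hsymm B hB i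
  exact grown_bound x t ht i hg i ((hB i i).mpr (Relation.EqvGen.refl i))
end

section
/- Let V be a finite-dimensional real normed vector space, I a finite set, x : I → V, t : I → (0,∞) with ∑ t_i = 1 and ∑ t_i x_i = 0. If the partition of I generated by i ~ j whenever |x_i − x_j| ≤ t_i + t_j is the indiscrete partition {I}, then max_{i∈I}(|x_i| + t_i) ≤ 1. -/
open Finset

private lemma exists_edge' {α : Type*} {R : α → α → Prop} {a b : α}
    (h : Relation.EqvGen R a b) : a ≠ b → ∃ u v, u ≠ v ∧ (R u v ∨ R v u) := by
  induction h with
  | rel u v huv => exact fun hne => ⟨u, v, hne, Or.inl huv⟩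
  | refl u => exact fun hne => absurd rfl hne
  | symm u v h ih => exact fun hne => ih hne.symm
  | trans u v w h1 h2 ih1 ih2 =>
      intro hne
      by_cases huv : u = v
      · exact ih2 (huv ▸ hne)
      · exact ih1 huv

private lemma lemA {I : Type*} [Fintype I] [DecidableEq I] {M : Type*} [AddCommMonoid M]
    {i j : I} (hij : i ≠ j) (f : I → M) (v : M) :
    (∑ k : {k : I // k ≠ j}, if (k : I) = i then v else f (k : I))
      = v + ∑ k ∈ (Finset.univ.erase j).erase i, f k := by
  rw [← Finset.sum_subtype (Finset.univ.erase j) (by simp) (fun k => if k = i then v else f k)]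
  have hi : i ∈ Finset.univ.erase j := by simp [hij]
  rw [← Finset.add_sum_erase _ (fun k => if k = i then v else f k) hi]
  rw [if_pos rfl]
  congr 1
  refine Finset.sum_congr rfl fun k hk => ?_
  rw [if_neg (Finset.ne_of_mem_erase hk)]

private lemma lemB {I : Type*} [Fintype I] [DecidableEq I] {M : Type*} [AddCommMonoid M]
    {i j : I} (hij : i ≠ j) (f : I → M) :
    (∑ k : I, f k) = f j + (f i + ∑ k ∈ (Finset.univ.erase j).erase i, f k) := by
  rw [← Finset.add_sum_erase _ f (Finset.mem_univ j)]
  have hi : i ∈ Finset.univ.erase j := by simp [hij]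
  rw [← Finset.add_sum_erase _ f hi]

private lemma aux {V : Type*} [NormedAddCommGroup V] [NormedSpace ℝ V] :
    ∀ (n : ℕ) (I : Type u) (_ : Fintype I), Fintype.card I ≤ n →
    ∀ (x : I → V) (t : I → ℝ), (∀ k, 0 < t k) →
    (∑ k, t k = 1) → (∑ k, t k • x k = 0) →
    (∀ i j : I, Relation.EqvGen (fun a b => ‖x a - x b‖ ≤ t a + t b) i j) →
    ∀ i, ‖x i‖ + t i ≤ 1 := by
  intro n
  induction n with
  | zero =>
      intro I instI hcard x t ht hsum hbar hconn m
      have : 0 < Fintype.card I := Fintype.card_pos_iff.2 ⟨m⟩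
      omega
  | succ n ih =>
      intro I instI hcard x t ht hsum hbar hconn m
      classical
      by_cases hsub : ∀ a b : I, a = b
      · -- singleton case
        haveI : Subsingleton I := ⟨hsub⟩
        haveI : Unique I := uniqueOfSubsingleton m
        have h1 : t m = 1 := by
          have := hsum
          rwa [Fintype.sum_unique, Subsingleton.elim default m] at this
        have h2 : x m = 0 := by
          have := hbar
          rw [Fintype.sum_unique, Subsingleton.elim default m, h1, one_smul] at this
          exact this
        simp [h1, h2]
      · push_neg at hsub
        obtain ⟨a, b, hab⟩ := hsub
        obtain ⟨i, j, hij, hR'⟩ := exists_edge' (hconn a b) hab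
        have hR : ‖x i - x j‖ ≤ t i + t j := by
          rcases hR' with h | h
          · exact h
          · rw [norm_sub_rev]; linarith [h]
        have hpos : (0:ℝ) < t i + t j := by linarith [ht i, ht j]
        have hne : t i + t j ≠ 0 := ne_of_gt hpos
        set c : V := (t i + t j)⁻¹ • (t i • x i + t j • x j) with hc
        have hsmulc : (t i + t j) • c = t i • x i + t j • x j := by
          rw [hc, smul_inv_smul₀ hne]
        have hxic : x i - c = (t j / (t i + t j)) • (x i - x j) := by
          rw [hc]
          match_scalars <;> field_simp <;> ring
        have hxjc : x j - c = (t i / (t i + t j)) • (x j - x i) := by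
          rw [hc]
          match_scalars <;> field_simp <;> ring
        have hnic : ‖x i - c‖ ≤ t j := by
          rw [hxic, norm_smul, Real.norm_eq_abs,
            abs_of_pos (div_pos (ht j) hpos)]
          calc t j / (t i + t j) * ‖x i - x j‖
              ≤ t j / (t i + t j) * (t i + t j) := by
                apply mul_le_mul_of_nonneg_left hR (le_of_lt (div_pos (ht j) hpos))
            _ = t j := div_mul_cancel₀ _ hne
        have hnjc : ‖x j - c‖ ≤ t i := by
          rw [hxjc, norm_smul, Real.norm_eq_abs,
            abs_of_pos (div_pos (ht i) hpos)]
          have : ‖x j - x i‖ ≤ t i + t j := by rw [norm_sub_rev]; exact hR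
          calc t i / (t i + t j) * ‖x j - x i‖
              ≤ t i / (t i + t j) * (t i + t j) := by
                apply mul_le_mul_of_nonneg_left this (le_of_lt (div_pos (ht i) hpos))
            _ = t i := div_mul_cancel₀ _ hne
        -- the new system on the subtype
        set I' := {k : I // k ≠ j} with hI'
        set x' : I' → V := fun k => if (k : I) = i then c else x k with hx'
        set t' : I' → ℝ := fun k => if (k : I) = i then t i + t j else t k with ht'def
        have ht' : ∀ k, 0 < t' k := by
          intro k
          rw [ht'def]
          dsimp only
          split
          · exact hpos
          · exact ht _
        have hsum' : ∑ k, t' k = 1 := by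
          have hA := lemA hij t (t i + t j)
          have hB := lemB hij t
          beta_reduce at hA hB
          rw [hsum] at hB
          calc ∑ k, t' k = ∑ k : I', if (k : I) = i then t i + t j else t (k : I) := rfl
            _ = (t i + t j) + ∑ k ∈ (Finset.univ.erase j).erase i, t k := hA
            _ = 1 := by linarith
        have hbar' : ∑ k, t' k • x' k = 0 := by
          have hA := lemA hij (fun k => t k • x k) (t i • x i + t j • x j)
          have hB := lemB hij (fun k => t k • x k)
          beta_reduce at hA hB
          rw [hbar] at hB
          have heq : ∀ k : I', t' k • x' k
              = if (k : I) = i then t i • x i + t j • x j else t (k : I) • x (k : I) := by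
            intro k
            rw [ht'def, hx']
            dsimp only
            split
            · exact hsmulc
            · rfl
          calc ∑ k, t' k • x' k
              = ∑ k : I', if (k : I) = i then t i • x i + t j • x j else t (k : I) • x (k : I) :=
                Finset.sum_congr rfl fun k _ => heq k
            _ = (t i • x i + t j • x j) + ∑ k ∈ (Finset.univ.erase j).erase i, t k • x k := hA
            _ = 0 := by rw [hB]; abel
        -- projection
        set proj : I → I' := fun k => if h : k = j then ⟨i, hij⟩ else ⟨k, h⟩ with hproj
        have hcontain : ∀ a : I, ‖x a - x' (proj a)‖ ≤ t' (proj a) - t a := by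
          intro a
          by_cases haj : a = j
          · have hp : proj a = ⟨i, hij⟩ := by rw [hproj]; simp [haj]
            have hx1 : x' ⟨i, hij⟩ = c := by rw [hx']; simp
            have ht1 : t' ⟨i, hij⟩ = t i + t j := by rw [ht'def]; simp
            rw [hp, hx1, ht1, haj]
            linarith
          · have hp : proj a = ⟨a, haj⟩ := by rw [hproj]; simp [haj]
            rw [hp]
            by_cases hai : a = i
            · have hx1 : x' ⟨a, haj⟩ = c := by rw [hx']; simp [hai]
              have ht1 : t' ⟨a, haj⟩ = t i + t j := by rw [ht'def]; simp [hai]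
              rw [hx1, ht1, hai]
              linarith
            · have hx1 : x' ⟨a, haj⟩ = x a := by rw [hx']; simp [hai]
              have ht1 : t' ⟨a, haj⟩ = t a := by rw [ht'def]; simp [hai]
              rw [hx1, ht1]
              simp
        have hmap : ∀ u v : I, ‖x u - x v‖ ≤ t u + t v →
            ‖x' (proj u) - x' (proj v)‖ ≤ t' (proj u) + t' (proj v) := by
          intro u v huv
          have h1 : x' (proj u) - x' (proj v)
              = -(x u - x' (proj u)) + (x u - x v) + (x v - x' (proj v)) := by abel
          have h2 : ‖x' (proj u) - x' (proj v)‖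
              ≤ ‖x u - x' (proj u)‖ + ‖x u - x v‖ + ‖x v - x' (proj v)‖ := by
            rw [h1]
            refine le_trans (norm_add_le _ _) (add_le_add_left
              (le_trans (norm_add_le _ _) (add_le_add_left (by rw [norm_neg]) _)) _)
          have hcu := hcontain u
          have hcv := hcontain v
          linarith
        have hconn' : ∀ a b : I',
            Relation.EqvGen (fun u v => ‖x' u - x' v‖ ≤ t' u + t' v) a b := by
          intro a b
          have key : ∀ u v : I, Relation.EqvGen (fun p q => ‖x p - x q‖ ≤ t p + t q) u v →
              Relation.EqvGen (fun p q => ‖x' p - x' q‖ ≤ t' p + t' q) (proj u) (proj v) := by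
            intro u v h
            induction h with
            | rel p q hpq => exact Relation.EqvGen.rel _ _ (hmap p q hpq)
            | refl p => exact Relation.EqvGen.refl _
            | symm p q _ ihh => exact Relation.EqvGen.symm _ _ ihh
            | trans p q r _ _ ih1 ih2 => exact Relation.EqvGen.trans _ _ _ ih1 ih2
          have ha : proj (a : I) = a := by
            rw [hproj]; simp only [dif_neg a.2]; rfl
          have hb : proj (b : I) = b := by
            rw [hproj]; simp only [dif_neg b.2]; rfl
          have := key a b (hconn a b)
          rwa [ha, hb] at this
        have hcard' : Fintype.card I' ≤ n := by
          have h1 : Fintype.card I' = Fintype.card I - 1 := by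
            have e1 : Fintype.card I' = Fintype.card {k : I // ¬ k = j} :=
              Fintype.card_congr (Equiv.subtypeEquivRight (by simp))
            have e2 : Fintype.card {k : I // ¬ k = j}
                = Fintype.card I - Fintype.card {k : I // k = j} :=
              Fintype.card_subtype_compl _
            rw [e1, e2, Fintype.card_subtype_eq]
          have h2 : 0 < Fintype.card I := Fintype.card_pos_iff.2 ⟨m⟩
          omega
        have hle := ih I' (inferInstance) hcard' x' t' ht' hsum' hbar' hconn'
        have hpm := hle (proj m)
        have hcm := hcontain m
        have h3 : ‖x m‖ ≤ ‖x' (proj m)‖ + ‖x m - x' (proj m)‖ := by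
          have h4 : x m = x' (proj m) + (x m - x' (proj m)) := by abel
          calc ‖x m‖ = ‖x' (proj m) + (x m - x' (proj m))‖ := by rw [← h4]
            _ ≤ _ := norm_add_le _ _
        linarith

/-- Final claim of Lemma (lem:part): if the partition generated by
`i ~ j ↔ ‖x i - x j‖ ≤ t i + t j` is indiscrete (all elements related), the weights
sum to `1` and the weighted barycentre is `0`, then `‖x i‖ + t i ≤ 1` for every `i`,
i.e. `max_i (‖x i‖ + t i) ≤ 1`. -/
theorem stmt_7 {V : Type*} [NormedAddCommGroup V] [NormedSpace ℝ V]
    {I : Type*} [Fintype I]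
    (x : I → V) (t : I → ℝ) (ht : ∀ k, 0 < t k)
    (hsum : ∑ k, t k = 1) (hbar : ∑ k, t k • x k = 0)
    (hconn : ∀ i j : I, Relation.EqvGen (fun a b => ‖x a - x b‖ ≤ t a + t b) i j) :
    ∀ i, ‖x i‖ + t i ≤ 1 := by
  exact aux (Fintype.card I) I inferInstance le_rfl x t ht hsum hbar hconn
end

section
/- Let V be a finite-dimensional real normed vector space, I a finite set, and (x,t) with x : I → V, t : I → (0,∞) satisfying |x_i| < t_i for all i and |x_i − x_j| < min(t_i, t_j) for all i, j ∈ I. Then for any two disjoint nonempty subsets K, K' ⊆ I, writing t_K = ∑_{k∈K} t_k and x_K = (∑_{k∈K} t_k x_k)/t_K, one has |x_K| < t_K and |x_K − x_{K'}| < min(t_K, t_{K'}). -/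
/-- Lemma (lem:barS): if each disc's interior contains the origin (`‖x i‖ < t i`) and
the centre of every other disc (`‖x i - x j‖ < min (t i) (t j)`), then the same
inequalities hold for the weighted barycentres of disjoint nonempty subsets. -/
theorem stmt_8 {V : Type*} [NormedAddCommGroup V] [NormedSpace ℝ V]
    {I : Type*} [Fintype I]
    (x : I → V) (t : I → ℝ) (ht : ∀ k, 0 < t k)
    (h1 : ∀ i, ‖x i‖ < t i)
    (h2 : ∀ i j, ‖x i - x j‖ < min (t i) (t j))
    (K K' : Finset I) (hK : K.Nonempty) (hK' : K'.Nonempty) (hd : Disjoint K K') :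
    ‖(∑ k ∈ K, t k)⁻¹ • ∑ k ∈ K, t k • x k‖ < ∑ k ∈ K, t k ∧
    ‖(∑ k ∈ K, t k)⁻¹ • (∑ k ∈ K, t k • x k)
        - (∑ k ∈ K', t k)⁻¹ • ∑ k ∈ K', t k • x k‖
      < min (∑ k ∈ K, t k) (∑ k ∈ K', t k) := by
  set S : ℝ := ∑ k ∈ K, t k with hS
  set S' : ℝ := ∑ k ∈ K', t k with hS'
  have hSpos : 0 < S := Finset.sum_pos (fun i _ => ht i) hK
  have hS'pos : 0 < S' := Finset.sum_pos (fun i _ => ht i) hK'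
  have hle : ∀ k ∈ K, t k ≤ S := fun k hk =>
    Finset.single_le_sum (fun i _ => (ht i).le) hk
  have hle' : ∀ k ∈ K', t k ≤ S' := fun k hk =>
    Finset.single_le_sum (fun i _ => (ht i).le) hk
  constructor
  · have h : ‖∑ k ∈ K, t k • x k‖ < S * S := by
      calc ‖∑ k ∈ K, t k • x k‖ ≤ ∑ k ∈ K, ‖t k • x k‖ := norm_sum_le _ _
        _ < ∑ k ∈ K, t k * S := by
            refine Finset.sum_lt_sum_of_nonempty hK fun k hk => ?_
            rw [norm_smul, Real.norm_eq_abs, abs_of_pos (ht k)]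
            exact mul_lt_mul_of_pos_left ((h1 k).trans_le (hle k hk)) (ht k)
        _ = S * S := by rw [← Finset.sum_mul, mul_comm]
    rw [norm_smul, Real.norm_eq_abs, abs_of_pos (inv_pos.2 hSpos)]
    calc S⁻¹ * ‖∑ k ∈ K, t k • x k‖ < S⁻¹ * (S * S) :=
          mul_lt_mul_of_pos_left h (inv_pos.2 hSpos)
      _ = S := by field_simp
  · set M : ℝ := min S S' with hM
    have hMpos : 0 < M := lt_min hSpos hS'pos
    set A : V := ∑ k ∈ K, t k • x k with hA
    set B : V := ∑ k ∈ K', t k • x k with hB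
    have key : S⁻¹ • A - S'⁻¹ • B = (S * S')⁻¹ • (S' • A - S • B) := by
      have c1 : (S * S')⁻¹ * S' = S⁻¹ := by field_simp
      have c2 : (S * S')⁻¹ * S = S'⁻¹ := by field_simp
      rw [smul_sub, smul_smul, smul_smul, c1, c2]
    have hAB : S' • A - S • B
        = ∑ k ∈ K, ∑ k' ∈ K', (t k * t k') • (x k - x k') := by
      have e1 : ∑ k ∈ K, ∑ k' ∈ K', (t k * t k') • x k = S' • A := by
        rw [hA, Finset.smul_sum]
        refine Finset.sum_congr rfl fun k _ => ?_
        rw [← Finset.sum_smul, ← Finset.mul_sum, smul_smul, ← hS', mul_comm]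
      have e2 : ∑ k ∈ K, ∑ k' ∈ K', (t k * t k') • x k' = S • B := by
        rw [hB, Finset.smul_sum, Finset.sum_comm]
        refine Finset.sum_congr rfl fun k' _ => ?_
        rw [← Finset.sum_smul, smul_smul]
        congr 1
        rw [← Finset.sum_mul, ← hS]
      simp only [smul_sub, Finset.sum_sub_distrib, e1, e2]
    have hnorm : ‖S' • A - S • B‖ < S * S' * M := by
      rw [hAB]
      calc ‖∑ k ∈ K, ∑ k' ∈ K', (t k * t k') • (x k - x k')‖
          ≤ ∑ k ∈ K, ‖∑ k' ∈ K', (t k * t k') • (x k - x k')‖ := norm_sum_le _ _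
        _ ≤ ∑ k ∈ K, ∑ k' ∈ K', ‖(t k * t k') • (x k - x k')‖ :=
            Finset.sum_le_sum fun k _ => norm_sum_le _ _
        _ < ∑ k ∈ K, ∑ k' ∈ K', t k * t k' * M := by
            refine Finset.sum_lt_sum_of_nonempty hK fun k hk => ?_
            refine Finset.sum_lt_sum_of_nonempty hK' fun k' hk' => ?_
            rw [norm_smul, Real.norm_eq_abs,
              abs_of_pos (mul_pos (ht k) (ht k'))]
            refine mul_lt_mul_of_pos_left ?_ (mul_pos (ht k) (ht k'))
            exact (h2 k k').trans_le
              (le_min ((min_le_left _ _).trans (hle k hk))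
                ((min_le_right _ _).trans (hle' k' hk')))
        _ = S * S' * M := by
            simp only [mul_assoc, ← Finset.mul_sum, ← Finset.sum_mul, ← hS, ← hS']
    rw [key, norm_smul, Real.norm_eq_abs,
      abs_of_pos (inv_pos.2 (mul_pos hSpos hS'pos))]
    calc (S * S')⁻¹ * ‖S' • A - S • B‖ < (S * S')⁻¹ * (S * S' * M) :=
          mul_lt_mul_of_pos_left hnorm (inv_pos.2 (mul_pos hSpos hS'pos))
      _ = M := by field_simp
end

section
/- Let V be a finite-dimensional real normed vector space, I∪_i J = (I∖{i}) ⊔ J, and (x,t) with x : I∪_i J → V, t : I∪_i J → (0,∞), satisfying |x_k| < t_k for all k and |x_k − x_l| < min(t_k, t_l) for all k, l. Then the 'quotient' point (x/J, t/J) — given by (t/J)_{i'} = t_{i'}, (x/J)_{i'} = x_{i'} for i' ≠ i, and (t/J)_i = t_J, (x/J)_i = x_J — satisfies the same inequalities: |(x/J)_{i'}| < (t/J)_{i'} and |(x/J)_{i'} − (x/J)_{i''}| < min((t/J)_{i'}, (t/J)_{i''}) for all i', i'' ∈ I. -/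
lemma bary_norm_lt {V : Type*} [NormedAddCommGroup V] [NormedSpace ℝ V]
    {J : Type*} [Fintype J] [Nonempty J]
    (w : J → ℝ) (hw : ∀ j, 0 < w j) (y : J → V) (B : ℝ) (hy : ∀ j, ‖y j‖ < B) :
    ‖(∑ j, w j)⁻¹ • ∑ j, w j • y j‖ < B := by
  have hW : 0 < ∑ j, w j := Finset.sum_pos (fun j _ => hw j) Finset.univ_nonempty
  have h1 : ‖∑ j, w j • y j‖ < (∑ j, w j) * B := by
    calc ‖∑ j, w j • y j‖ ≤ ∑ j, ‖w j • y j‖ := norm_sum_le _ _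
      _ = ∑ j, w j * ‖y j‖ := by
          refine Finset.sum_congr rfl fun j _ => ?_
          rw [norm_smul, Real.norm_eq_abs, abs_of_pos (hw j)]
      _ < ∑ j, w j * B := Finset.sum_lt_sum_of_nonempty Finset.univ_nonempty
          (fun j _ => mul_lt_mul_of_pos_left (hy j) (hw j))
      _ = (∑ j, w j) * B := (Finset.sum_mul _ _ _).symm
  rw [norm_smul, Real.norm_eq_abs, abs_of_pos (inv_pos.mpr hW), inv_mul_lt_iff₀ hW]
  exact h1

/-- Proposition (prop:S-coop), quotient part: if `(x,t)`, indexed by the union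
`I ∪_i J = {i' : I // i' ≠ i} ⊕ J`, satisfies the star-shaped inequalities
`‖x k‖ < t k` and `‖x k - x l‖ < min (t k) (t l)`, then the quotient point
`(x/J, t/J)`, indexed by `I`, satisfies the same inequalities. -/
theorem stmt_9 {V : Type*} [NormedAddCommGroup V] [NormedSpace ℝ V]
    {I J : Type*} [Fintype I] [Fintype J] [DecidableEq I] [Nonempty J]
    (i : I)
    (x : ({i' : I // i' ≠ i} ⊕ J) → V) (t : ({i' : I // i' ≠ i} ⊕ J) → ℝ)
    (ht : ∀ k, 0 < t k)
    (h1 : ∀ k, ‖x k‖ < t k)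
    (h2 : ∀ k l, ‖x k - x l‖ < min (t k) (t l))
    (tq : I → ℝ) (xq : I → V)
    (htq : ∀ (i') (h : i' ≠ i), tq i' = t (Sum.inl ⟨i', h⟩))
    (htqi : tq i = ∑ j, t (Sum.inr j))
    (hxq : ∀ (i') (h : i' ≠ i), xq i' = x (Sum.inl ⟨i', h⟩))
    (hxqi : xq i = (∑ j, t (Sum.inr j))⁻¹ • ∑ j, t (Sum.inr j) • x (Sum.inr j)) :
    (∀ i', ‖xq i'‖ < tq i') ∧
    ∀ i' i'', ‖xq i' - xq i''‖ < min (tq i') (tq i'') := by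
  set W : ℝ := ∑ j, t (Sum.inr j) with hWdef
  have hW : 0 < W := Finset.sum_pos (fun j _ => ht _) Finset.univ_nonempty
  have htJ : ∀ j, t (Sum.inr j) ≤ W :=
    fun j => Finset.single_le_sum (fun k _ => (ht (Sum.inr k)).le) (Finset.mem_univ j)
  have key : ∀ (c : V) (B : ℝ), (∀ j, ‖x (Sum.inr j) - c‖ < B) → ‖xq i - c‖ < B := by
    intro c B hB
    have heq : xq i - c = W⁻¹ • ∑ j, t (Sum.inr j) • (x (Sum.inr j) - c) := by
      rw [hxqi]
      have : ∑ j, t (Sum.inr j) • (x (Sum.inr j) - c)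
          = (∑ j, t (Sum.inr j) • x (Sum.inr j)) - W • c := by
        rw [hWdef, Finset.sum_smul, ← Finset.sum_sub_distrib]
        exact Finset.sum_congr rfl fun j _ => smul_sub _ _ _
      rw [this, smul_sub, smul_smul, inv_mul_cancel₀ hW.ne', one_smul]
    rw [heq]
    exact bary_norm_lt _ (fun j => ht _) _ _ hB
  have key0 : ‖xq i‖ < W := by
    have := key 0 W (fun j => by
      simpa using lt_of_lt_of_le (h1 (Sum.inr j)) (htJ j))
    simpa using this
  have hdiff : ∀ (i' : I) (h : i' ≠ i), ‖xq i - xq i'‖ < min (tq i) (tq i') := by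
    intro i' h
    rw [hxq i' h, htq i' h, htqi]
    exact key _ _ fun j =>
      lt_of_lt_of_le (h2 (Sum.inr j) (Sum.inl ⟨i', h⟩)) (min_le_min (htJ j) le_rfl)
  constructor
  · intro i'
    by_cases h : i' = i
    · subst h; rw [htqi]; exact key0
    · rw [hxq i' h, htq i' h]; exact h1 _
  · intro i' i''
    by_cases h' : i' = i <;> by_cases h'' : i'' = i
    · rw [h', h'', sub_self, norm_zero, htqi]
      exact lt_min hW hW
    · rw [h']
      exact hdiff i'' h''
    · rw [h'', norm_sub_rev, min_comm]
      exact hdiff i' h'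
    · rw [hxq i' h', hxq i'' h'', htq i' h', htq i'' h'']
      exact h2 _ _
end

section
/- Let V be a finite-dimensional real normed vector space and (x,t) as above with |x_k| < t_k and |x_k − x_l| < min(t_k, t_l) for all k, l ∈ I∪_i J. Then the 'restriction' point (x|J, t|J), given by (t|J)_j = t_j/t_J and (x|J)_j = (x_j − x_J)/t_J for j ∈ J, satisfies |(x|J)_j| < (t|J)_j and |(x|J)_j − (x|J)_{j'}| < min((t|J)_j, (t|J)_{j'}) for all j, j' ∈ J. -/
/-- Proposition (prop:S-coop), restriction part: if `(x,t)` satisfies the star-shaped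
inequalities, then the restriction point `(x|J, t|J)`, given by
`(t|J)_j = t j / t_J` and `(x|J)_j = t_J⁻¹ • (x j - x_J)`, satisfies them over `J`. -/
theorem stmt_10 {V : Type*} [NormedAddCommGroup V] [NormedSpace ℝ V]
    {ι : Type*} [Fintype ι]
    (J : Finset ι) (hJ : J.Nonempty)
    (x : ι → V) (t : ι → ℝ) (ht : ∀ k, 0 < t k)
    (h1 : ∀ k, ‖x k‖ < t k)
    (h2 : ∀ k l, ‖x k - x l‖ < min (t k) (t l)) :
    (∀ j ∈ J,
      ‖(∑ k ∈ J, t k)⁻¹ • (x j - (∑ k ∈ J, t k)⁻¹ • ∑ k ∈ J, t k • x k)‖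
        < t j / ∑ k ∈ J, t k) ∧
    ∀ j ∈ J, ∀ j' ∈ J,
      ‖(∑ k ∈ J, t k)⁻¹ • (x j - (∑ k ∈ J, t k)⁻¹ • ∑ k ∈ J, t k • x k)
          - (∑ k ∈ J, t k)⁻¹ • (x j' - (∑ k ∈ J, t k)⁻¹ • ∑ k ∈ J, t k • x k)‖
        < min (t j / ∑ k ∈ J, t k) (t j' / ∑ k ∈ J, t k) := by
  set T := ∑ k ∈ J, t k with hT
  have hTpos : 0 < T := Finset.sum_pos (fun k _ => ht k) hJ
  have hTinv : (0:ℝ) < T⁻¹ := inv_pos.mpr hTpos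
  have key : ∀ j, x j - T⁻¹ • ∑ k ∈ J, t k • x k
      = T⁻¹ • ∑ k ∈ J, t k • (x j - x k) := by
    intro j
    have : ∑ k ∈ J, t k • (x j - x k) = T • x j - ∑ k ∈ J, t k • x k := by
      simp [smul_sub, Finset.sum_sub_distrib, ← Finset.sum_smul, hT]
    rw [this, smul_sub, smul_smul, inv_mul_cancel₀ hTpos.ne', one_smul]
  constructor
  · intro j hj
    rw [key j, smul_smul, norm_smul]
    have hsum : ‖∑ k ∈ J, t k • (x j - x k)‖ < T * t j := by
      calc ‖∑ k ∈ J, t k • (x j - x k)‖ ≤ ∑ k ∈ J, ‖t k • (x j - x k)‖ :=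
            norm_sum_le _ _
        _ < ∑ k ∈ J, t k * t j := by
            refine Finset.sum_lt_sum_of_nonempty hJ fun k _ => ?_
            rw [norm_smul, Real.norm_eq_abs, abs_of_pos (ht k)]
            exact mul_lt_mul_of_pos_left (lt_of_lt_of_le (h2 j k) (min_le_left _ _)) (ht k)
        _ = T * t j := by rw [← Finset.sum_mul]
    have hnorm : ‖T⁻¹ * T⁻¹‖ = T⁻¹ * T⁻¹ := by
      rw [Real.norm_eq_abs, abs_of_pos (mul_pos hTinv hTinv)]
    rw [hnorm]
    calc T⁻¹ * T⁻¹ * ‖∑ k ∈ J, t k • (x j - x k)‖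
        < T⁻¹ * T⁻¹ * (T * t j) :=
          mul_lt_mul_of_pos_left hsum (mul_pos hTinv hTinv)
      _ = t j / T := by field_simp
  · intro j hj j' hj'
    rw [← smul_sub, sub_sub_sub_cancel_right, norm_smul, Real.norm_eq_abs,
      abs_of_pos hTinv]
    have : min (t j / T) (t j' / T) = T⁻¹ * min (t j) (t j') := by
      rw [div_eq_inv_mul, div_eq_inv_mul, ← mul_min_of_nonneg _ _ hTinv.le]
    rw [this]
    exact mul_lt_mul_of_pos_left (h2 j j') hTinv
end
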